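/- Assume (H3) and (H4). If U ∈ ℝⁿ is a solution of the Bellman problem sup_{P∈𝒫}{−A(P)U + y(P)} = 0, then there exists a sequence (Pℓ)_{ℓ≥1} in 𝒫 such that −A(Pℓ)U + y(Pℓ) → 0 entrywise as ℓ → ∞ and A(Pℓ) is a nonsingular M-matrix (equivalently, a WCDD matrix) for every ℓ. -/

import Mathlib

open Filter Topology Finset

open scoped Classical

noncomputable section

/-- Row `i` of `A` is strictly diagonally dominant (SDD). -/
def SDDRow {n : ℕ} (A : Matrix (Fin n) (Fin n) ℝ) (i : Fin n) : Prop :=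
  ∑ j ∈ Finset.univ.erase i, |A i j| < |A i i|

/-- `A` is weakly diagonally dominant (WDD). -/
def WDD {n : ℕ} (A : Matrix (Fin n) (Fin n) ℝ) : Prop :=
  ∀ i, ∑ j ∈ Finset.univ.erase i, |A i j| ≤ |A i i|

/-- `A` is a Z-matrix: nonpositive off-diagonal entries. -/
def ZMat {n : ℕ} (A : Matrix (Fin n) (Fin n) ℝ) : Prop :=
  ∀ i j, i ≠ j → A i j ≤ 0

/-- `A` is weakly chained diagonally dominant (WCDD). -/
def WCDD {n : ℕ} (A : Matrix (Fin n) (Fin n) ℝ) : Prop :=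
  WDD A ∧ ∀ i, ¬ SDDRow A i →
    ∃ j, Relation.ReflTransGen (fun k l => A k l ≠ 0) i j ∧ SDDRow A j

/-- Row-decoupled data. -/
def RowDecoupled {n : ℕ} {P : Fin n → Type*}
    (A : (∀ i, P i) → Matrix (Fin n) (Fin n) ℝ)
    (y : (∀ i, P i) → (Fin n → ℝ)) : Prop :=
  ∀ p q : ∀ i, P i, ∀ i, p i = q i →
    (∀ j, A p i j = A q i j) ∧ y p i = y q i

/-- `U` solves the Bellman problem `sup_{P∈𝒫} {−A(P)U + y(P)} = 0`. -/
def IsBellmanSol {n : ℕ} {P : Fin n → Type*}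
    (A : (∀ i, P i) → Matrix (Fin n) (Fin n) ℝ)
    (y : (∀ i, P i) → (Fin n → ℝ)) (U : Fin n → ℝ) : Prop :=
  ∀ i, IsLUB (Set.range fun p => y p i - (A p).mulVec U i) 0

/-- (H3): every `A(P)` is a WDD Z-matrix with nonnegative diagonal entries whose diagonal
entries are at most `1` on rows that are not SDD. -/
def H3 {n : ℕ} {P : Fin n → Type*}
    (A : (∀ i, P i) → Matrix (Fin n) (Fin n) ℝ) : Prop :=
  ∀ p, ZMat (A p) ∧ WDD (A p) ∧ (∀ i, 0 ≤ A p i i) ∧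
    ∀ i, ¬ SDDRow (A p) i → A p i i ≤ 1

/-- `ŷ(P)ᵢ = y(P)ᵢ` if row `i` of `A(P)` is not SDD, and `−∞` otherwise. -/
def yhat {n : ℕ} {P : Fin n → Type*}
    (A : (∀ i, P i) → Matrix (Fin n) (Fin n) ℝ)
    (y : (∀ i, P i) → (Fin n → ℝ)) (p : ∀ i, P i) (i : Fin n) : EReal :=
  if SDDRow (A p) i then ⊥ else ((y p i : ℝ) : EReal)

/-- The operator `𝕄U = U + 𝔸U` on vectors with entries in `ℝ ∪ {−∞}`, where
`[𝔸U]ᵢ = sup_P [−A(P)U + ŷ(P)]ᵢ`, computed with the conventions `r + (−∞) = −∞`,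
`t·(−∞) = −∞` for `t > 0` and `0·(−∞) = 0`; entrywise this reads
`[𝕄U]ᵢ = sup_P { (1 − A(P)ᵢᵢ)·Uᵢ + Σ_{j≠i} (−A(P)ᵢⱼ)·Uⱼ + ŷ(P)ᵢ }`. -/
def Mbb {n : ℕ} {P : Fin n → Type*}
    (A : (∀ i, P i) → Matrix (Fin n) (Fin n) ℝ)
    (y : (∀ i, P i) → (Fin n → ℝ)) (U : Fin n → EReal) : Fin n → EReal :=
  fun i => ⨆ p : ∀ i, P i,
    (((1 - A p i i : ℝ) : EReal) * U i
      + ∑ j ∈ Finset.univ.erase i, ((-A p i j : ℝ) : EReal) * U j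
      + yhat A y p i)

/-- (H4): consecutive applications of `𝕄` are eventually strictly suboptimal. -/
def H4 {n : ℕ} {P : Fin n → Type*}
    (A : (∀ i, P i) → Matrix (Fin n) (Fin n) ℝ)
    (y : (∀ i, P i) → (Fin n → ℝ)) : Prop :=
  ∀ (U : Fin n → ℝ) (i : Fin n), ∃ m₁ m₂ : ℕ, m₁ < m₂ ∧
    (Mbb A y)^[m₂] (fun j => ((U j : ℝ) : EReal)) i
      < (Mbb A y)^[m₁] (fun j => ((U j : ℝ) : EReal)) i

/-! ### Auxiliary lemmas -/

theorem wcdd_nonneg_sol' {n : ℕ} {A : Matrix (Fin n) (Fin n) ℝ}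
    (hZ : ZMat A) (hd : ∀ i, 0 ≤ A i i) (hW : WCDD A)
    (x : Fin n → ℝ) (hx : ∀ i, 0 ≤ A.mulVec x i) : ∀ i, 0 ≤ x i := by
  by_contra hneg
  push_neg at hneg
  obtain ⟨i₀, hi₀⟩ := hneg
  have hne : (Finset.univ : Finset (Fin n)).Nonempty := ⟨i₀, mem_univ _⟩
  obtain ⟨j₀, -, hj₀⟩ := Finset.exists_min_image Finset.univ x hne
  have hj₀min : ∀ k, x j₀ ≤ x k := fun k => hj₀ k (mem_univ _)
  set m := x j₀ with hm
  have hmneg : m < 0 := lt_of_le_of_lt (hj₀min i₀) hi₀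
  have key : ∀ j, x j = m → ¬ SDDRow A j ∧ ∀ k, A j k ≠ 0 → x k = m := by
    intro j hxj
    have hrow : A.mulVec x j = A j j * x j + ∑ k ∈ univ.erase j, A j k * x k := by
      rw [Matrix.mulVec, dotProduct]
      rw [← Finset.add_sum_erase _ _ (mem_univ j)]
    have habs : ∀ k, k ≠ j → |A j k| = - A j k := fun k hk => abs_of_nonpos (hZ j k (Ne.symm hk))
    have hsum_abs : ∑ k ∈ univ.erase j, |A j k| = - ∑ k ∈ univ.erase j, A j k := by
      rw [← Finset.sum_neg_distrib]
      exact Finset.sum_congr rfl fun k hk => habs k (Finset.ne_of_mem_erase hk)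
    have hterm : ∀ k ∈ univ.erase j, A j k * x k ≤ A j k * m :=
      fun k hk => mul_le_mul_of_nonpos_left (hj₀min k) (hZ j k (Ne.symm (Finset.ne_of_mem_erase hk)))
    have hsum_le : ∑ k ∈ univ.erase j, A j k * x k ≤ ∑ k ∈ univ.erase j, A j k * m :=
      Finset.sum_le_sum hterm
    have hc : 0 ≤ A j j + ∑ k ∈ univ.erase j, A j k := by
      have := hW.1 j
      rw [hsum_abs, abs_of_nonneg (hd j)] at this
      linarith
    have hsm : ∑ k ∈ univ.erase j, A j k * m = (∑ k ∈ univ.erase j, A j k) * m :=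
      (Finset.sum_mul _ _ _).symm
    have hub : A.mulVec x j ≤ m * (A j j + ∑ k ∈ univ.erase j, A j k) := by
      rw [hrow, hxj]
      have hr : m * (A j j + ∑ k ∈ univ.erase j, A j k)
          = A j j * m + (∑ k ∈ univ.erase j, A j k) * m := by ring
      linarith [hsum_le]
    constructor
    · intro hSDD
      have hcpos : 0 < A j j + ∑ k ∈ univ.erase j, A j k := by
        have := hSDD
        rw [SDDRow, hsum_abs, abs_of_nonneg (hd j)] at this
        linarith
      have : A.mulVec x j < 0 := lt_of_le_of_lt hub (mul_neg_of_neg_of_pos hmneg hcpos)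
      exact absurd (hx j) (not_le.2 this)
    · intro k hk
      by_cases hkj : k = j
      · rw [hkj, hxj]
      have h0 : A.mulVec x j = 0 := by
        have h1 : m * (A j j + ∑ k ∈ univ.erase j, A j k) ≤ 0 :=
          mul_nonpos_of_nonpos_of_nonneg hmneg.le hc
        linarith [hx j, hub]
      have hsum_eq : ∑ l ∈ univ.erase j, A j l * x l = ∑ l ∈ univ.erase j, A j l * m := by
        apply le_antisymm hsum_le
        have h3 : ∑ l ∈ univ.erase j, A j l * x l = - (A j j * x j) := by
          have := hrow
          linarith [h0]
        rw [hsm, h3, hxj]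
        nlinarith [hc, hmneg]
      have heq := (Finset.sum_eq_sum_iff_of_le hterm).mp hsum_eq k
        (Finset.mem_erase.mpr ⟨hkj, mem_univ _⟩)
      exact mul_left_cancel₀ hk heq
  have hwalkm : ∀ jj, Relation.ReflTransGen (fun k l => A k l ≠ 0) j₀ jj → x jj = m := by
    intro jj h
    induction h with
    | refl => exact hm.symm ▸ rfl
    | tail hab hbc ih => exact (key _ ih).2 _ hbc
  obtain ⟨jend, hwalk, hSDD⟩ := hW.2 j₀ ((key j₀ rfl).1)
  exact (key jend (hwalkm _ hwalk)).1 hSDD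

theorem wcdd_M' {n : ℕ} {A : Matrix (Fin n) (Fin n) ℝ}
    (hZ : ZMat A) (hd : ∀ i, 0 ≤ A i i) (hW : WCDD A) :
    IsUnit A.det ∧ ∀ i j, 0 ≤ A⁻¹ i j := by
  have hdet : A.det ≠ 0 := by
    intro h
    obtain ⟨v, hv0, hv⟩ := Matrix.exists_mulVec_eq_zero_iff.mpr h
    have h1 : ∀ i, 0 ≤ v i := wcdd_nonneg_sol' hZ hd hW v (fun i => by simp [hv])
    have h2 : ∀ i, 0 ≤ (-v) i := wcdd_nonneg_sol' hZ hd hW (-v)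
      (fun i => by rw [Matrix.mulVec_neg, hv]; simp)
    apply hv0; funext i
    have ha := h1 i; have hb := h2 i
    simp only [Pi.neg_apply] at hb
    simp only [Pi.zero_apply]
    linarith
  have hu : IsUnit A.det := isUnit_iff_ne_zero.mpr hdet
  refine ⟨hu, fun i j => ?_⟩
  have hcol : ∀ i, 0 ≤ A.mulVec (fun k => A⁻¹ k j) i := by
    intro i
    have h : A.mulVec (fun k => A⁻¹ k j) i = (A * A⁻¹) i j := by
      simp [Matrix.mulVec, Matrix.mul_apply, dotProduct]
    rw [h, Matrix.mul_nonsing_inv A hu, Matrix.one_apply]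
    split <;> norm_num
  exact wcdd_nonneg_sol' hZ hd hW _ hcol i

lemma ereal_ge_of_forall' (a : EReal) (c ε : ℝ) (hε : 0 < ε)
    (h : ∀ δ : ℝ, 0 < δ → δ ≤ ε → ((c - δ : ℝ) : EReal) ≤ a) : (c : EReal) ≤ a := by
  induction a using EReal.rec with
  | bot => exact absurd (h ε hε le_rfl) (not_le.mpr (EReal.bot_lt_coe _))
  | coe r =>
      have h2 : ∀ δ : ℝ, 0 < δ → δ ≤ ε → c - δ ≤ r := fun δ h1 h2 => by exact_mod_cast h δ h1 h2
      have h3 : c ≤ r := by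
        by_contra hcr
        push_neg at hcr
        have hδ := h2 (min ε ((c - r)/2)) (lt_min hε (by linarith)) (min_le_left _ _)
        have := min_le_right ε ((c - r)/2)
        linarith
      exact_mod_cast h3
  | top => exact le_top

lemma ereal_coe_sum' {α : Type*} (s : Finset α) (f : α → ℝ) :
    ((∑ j ∈ s, f j : ℝ) : EReal) = ∑ j ∈ s, ((f j : ℝ) : EReal) := by
  induction s using Finset.induction with
  | empty => simp
  | insert _ _ h ih => rw [Finset.sum_insert h, Finset.sum_insert h, ← ih, EReal.coe_add]

section BellmanAux

variable {n : ℕ} {P : Fin n → Type*}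

/-- Rank-indexed "good index" predicate. -/
def GoodN (A : (∀ i, P i) → Matrix (Fin n) (Fin n) ℝ) (y : (∀ i, P i) → Fin n → ℝ)
    (U : Fin n → ℝ) (ε : ℝ) : ℕ → Fin n → Prop
  | 0, i => ∃ p, -ε < y p i - (A p).mulVec U i ∧ SDDRow (A p) i
  | (k+1), i => GoodN A y U ε k i ∨ ∃ p, (-ε < y p i - (A p).mulVec U i) ∧
      ∃ j, j ≠ i ∧ A p i j ≠ 0 ∧ GoodN A y U ε k j

lemma term_bot (A : (∀ i, P i) → Matrix (Fin n) (Fin n) ℝ) (y : (∀ i, P i) → Fin n → ℝ)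
    (p : ∀ i, P i) (i : Fin n) (W : Fin n → EReal) (hs : SDDRow (A p) i) :
    ((1 - A p i i : ℝ) : EReal) * W i
      + ∑ j ∈ Finset.univ.erase i, ((-A p i j : ℝ) : EReal) * W j + yhat A y p i = ⊥ := by
  rw [yhat, if_pos hs, EReal.add_bot]

lemma term_real (A : (∀ i, P i) → Matrix (Fin n) (Fin n) ℝ) (y : (∀ i, P i) → Fin n → ℝ)
    (p : ∀ i, P i) (i : Fin n) (W : Fin n → EReal) (w : Fin n → ℝ)
    (hs : ¬ SDDRow (A p) i) (hwi : W i = ((w i : ℝ) : EReal))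
    (hw : ∀ j, j ≠ i → A p i j ≠ 0 → W j = ((w j : ℝ) : EReal)) :
    ((1 - A p i i : ℝ) : EReal) * W i
      + ∑ j ∈ Finset.univ.erase i, ((-A p i j : ℝ) : EReal) * W j + yhat A y p i
      = (((1 - A p i i) * w i + ∑ j ∈ Finset.univ.erase i, (-A p i j) * w j + y p i : ℝ) : EReal) := by
  rw [yhat, if_neg hs]
  have hsum : ∑ j ∈ Finset.univ.erase i, ((-A p i j : ℝ) : EReal) * W j
      = ((∑ j ∈ Finset.univ.erase i, (-A p i j) * w j : ℝ) : EReal) := by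
    rw [ereal_coe_sum']
    refine Finset.sum_congr rfl fun j hj => ?_
    by_cases hA : A p i j = 0
    · simp [hA]
    · rw [hw j (Finset.ne_of_mem_erase hj) hA, ← EReal.coe_mul]
  rw [hwi, hsum, ← EReal.coe_mul, ← EReal.coe_add, ← EReal.coe_add]

lemma real_val (A : (∀ i, P i) → Matrix (Fin n) (Fin n) ℝ) (y : (∀ i, P i) → Fin n → ℝ)
    (p : ∀ i, P i) (U : Fin n → ℝ) (i : Fin n) :
    (1 - A p i i) * U i + ∑ j ∈ Finset.univ.erase i, (-A p i j) * U j + y p i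
      = U i + (y p i - (A p).mulVec U i) := by
  have hmv : (A p).mulVec U i = A p i i * U i + ∑ j ∈ univ.erase i, A p i j * U j := by
    rw [Matrix.mulVec, dotProduct, ← Finset.add_sum_erase _ _ (mem_univ i)]
  have h2 : ∑ j ∈ univ.erase i, (-A p i j) * U j = - ∑ j ∈ univ.erase i, A p i j * U j := by
    rw [← Finset.sum_neg_distrib]
    exact Finset.sum_congr rfl fun j _ => by ring
  rw [hmv, h2]; ring

theorem exists_good_control [∀ i, Nonempty (P i)]
    (A : (∀ i, P i) → Matrix (Fin n) (Fin n) ℝ) (y : (∀ i, P i) → Fin n → ℝ)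
    (hrd : RowDecoupled A y) (h3 : H3 A) (h4 : H4 A y)
    (U : Fin n → ℝ) (hU : IsBellmanSol A y U) (ε : ℝ) (hε : 0 < ε) :
    ∃ q : ∀ i, P i, (∀ i, -ε < y q i - (A q).mulVec U i) ∧ WCDD (A q) := by
  have hr0 : ∀ (p : ∀ i, P i) (i : Fin n), y p i - (A p).mulVec U i ≤ 0 := fun p i =>
    (hU i).1 (Set.mem_range_self p)
  have hnear : ∀ (i : Fin n) (δ : ℝ), 0 < δ → ∃ p, -δ < y p i - (A p).mulVec U i := by
    intro i δ hδ
    by_contra hcon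
    push_neg at hcon
    have h0 : (0:ℝ) ≤ -δ := (hU i).2 (by rintro v ⟨p, rfl⟩; exact hcon p)
    linarith
  have hall : ∀ i, ∃ k, GoodN A y U ε k i := by
    by_contra hcon
    push_neg at hcon
    obtain ⟨i₀, hi₀⟩ := hcon
    have hKB : ∀ i, (∀ k, ¬ GoodN A y U ε k i) → ∀ p, -ε < y p i - (A p).mulVec U i →
        ¬ SDDRow (A p) i ∧ ∀ j, j ≠ i → A p i j ≠ 0 → (∀ k, ¬ GoodN A y U ε k j) := by
      intro i hB p hp
      constructor
      · intro hs
        exact hB 0 (by simp only [GoodN]; exact ⟨p, hp, hs⟩)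
      · intro j hji hA
        by_contra hBj
        push_neg at hBj
        obtain ⟨k, hk⟩ := hBj
        exact hB (k+1) (by simp only [GoodN]; exact Or.inr ⟨p, hp, j, hji, hA, hk⟩)
    set V : Fin n → EReal := fun j => ((U j : ℝ) : EReal) with hV
    have hVi : ∀ j, V j = ((U j : ℝ) : EReal) := fun j => by rw [hV]
    have hMVmono : ∀ (W₁ W₂ : Fin n → EReal), (∀ j, W₁ j ≤ W₂ j) →
        ∀ i, Mbb A y W₁ i ≤ Mbb A y W₂ i := by
      intro W₁ W₂ h i
      simp only [Mbb]
      refine iSup_mono fun p => ?_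
      by_cases hs : SDDRow (A p) i
      · rw [term_bot A y p i W₁ hs]; exact bot_le
      · refine add_le_add (add_le_add ?_ ?_) le_rfl
        · exact mul_le_mul_of_nonneg_left (h i)
            (EReal.coe_nonneg.2 (by linarith [(h3 p).2.2.2 i hs]))
        · exact Finset.sum_le_sum fun j hj => mul_le_mul_of_nonneg_left (h j)
            (EReal.coe_nonneg.2
              (by linarith [(h3 p).1 i j (Ne.symm (Finset.ne_of_mem_erase hj))]))
    have hMVle : ∀ i, Mbb A y V i ≤ V i := by
      intro i
      simp only [Mbb]
      refine iSup_le fun p => ?_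
      by_cases hs : SDDRow (A p) i
      · rw [term_bot A y p i V hs]; exact bot_le
      · rw [term_real A y p i V U hs (hVi i) (fun j _ _ => hVi j), real_val A y p U i, hVi i]
        exact EReal.coe_le_coe_iff.2 (by linarith [hr0 p i])
    have hWdec : ∀ m, ∀ i, (Mbb A y)^[m+1] V i ≤ (Mbb A y)^[m] V i := by
      intro m
      induction m with
      | zero => intro i; simpa using hMVle i
      | succ m ih =>
          intro i
          have h := hMVmono _ _ ih i
          have e1 : (Mbb A y)^[m+1+1] V i = Mbb A y ((Mbb A y)^[m+1] V) i := by
            rw [Function.iterate_succ_apply']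
          have e2 : (Mbb A y)^[m+1] V i = Mbb A y ((Mbb A y)^[m] V) i := by
            rw [Function.iterate_succ_apply']
          rw [e1, e2]
          exact h
    have hWle : ∀ m, ∀ i, (Mbb A y)^[m] V i ≤ V i := by
      intro m
      induction m with
      | zero => intro i; exact le_rfl
      | succ m ih => intro i; exact le_trans (hWdec m i) (ih i)
    have hinv : ∀ m, ∀ i, (∀ k, ¬ GoodN A y U ε k i) → (Mbb A y)^[m] V i = V i := by
      intro m
      induction m with
      | zero => intro i _; simp
      | succ m ih =>
          intro i hB
          refine le_antisymm (hWle (m+1) i) ?_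
          rw [hVi i, Function.iterate_succ_apply']
          refine ereal_ge_of_forall' _ (U i) ε hε fun δ hδ hδε => ?_
          obtain ⟨p, hp⟩ := hnear i δ hδ
          have hpε : -ε < y p i - (A p).mulVec U i := lt_of_le_of_lt (by linarith) hp
          obtain ⟨hs, hnb⟩ := hKB i hB p hpε
          simp only [Mbb]
          refine le_iSup_of_le p ?_
          rw [term_real A y p i ((Mbb A y)^[m] V) U hs
            ((ih i hB).trans (hVi i))
            (fun j hji hA => ((ih j (hnb j hji hA)).trans (hVi j))),
            real_val A y p U i]
          exact EReal.coe_le_coe_iff.2 (by linarith)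
    obtain ⟨m₁, m₂, hm, hlt⟩ := h4 U i₀
    rw [← hV] at hlt
    rw [hinv m₁ i₀ hi₀, hinv m₂ i₀ hi₀] at hlt
    exact lt_irrefl _ hlt
  have hchoice : ∀ i, ∃ p, (-ε < y p i - (A p).mulVec U i) ∧
      (SDDRow (A p) i ∨ ∃ j, j ≠ i ∧ A p i j ≠ 0 ∧ Nat.find (hall j) < Nat.find (hall i)) := by
    intro i
    rcases hk : Nat.find (hall i) with _ | k
    · have h0 : GoodN A y U ε 0 i := by
        have := Nat.find_spec (hall i); rwa [hk] at this
      simp only [GoodN] at h0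
      obtain ⟨p, hp, hs⟩ := h0
      exact ⟨p, hp, Or.inl hs⟩
    · have hk1 : GoodN A y U ε (k+1) i := by
        have := Nat.find_spec (hall i); rwa [hk] at this
      simp only [GoodN] at hk1
      rcases hk1 with h | ⟨p, hp, j, hji, hA, hgj⟩
      · exact absurd h (Nat.find_min (hall i) (by rw [hk]; exact k.lt_succ_self))
      · refine ⟨p, hp, Or.inr ⟨j, hji, hA, ?_⟩⟩
        have h1 : Nat.find (hall j) ≤ k := Nat.find_le hgj
        omega
  choose pc hc1 hc2 using hchoice
  set q : ∀ i, P i := fun i => pc i i with hq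
  have hrow : ∀ i, (∀ j, A (pc i) i j = A q i j) ∧ y (pc i) i = y q i :=
    fun i => hrd (pc i) q i (by simp [hq])
  have hmvq : ∀ i, (A q).mulVec U i = (A (pc i)).mulVec U i := by
    intro i
    simp only [Matrix.mulVec, dotProduct]
    exact Finset.sum_congr rfl fun j _ => by rw [(hrow i).1 j]
  have hrq : ∀ i, y q i - (A q).mulVec U i = y (pc i) i - (A (pc i)).mulVec U i := by
    intro i; rw [hmvq i, (hrow i).2]
  have hSDDq : ∀ i, (SDDRow (A q) i ↔ SDDRow (A (pc i)) i) := by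
    intro i
    have h1 : ∑ j ∈ univ.erase i, |A q i j| = ∑ j ∈ univ.erase i, |A (pc i) i j| :=
      Finset.sum_congr rfl fun j _ => by rw [(hrow i).1 j]
    unfold SDDRow
    rw [h1, (hrow i).1 i]
  have hchain : ∀ k, ∀ i, Nat.find (hall i) ≤ k →
      ∃ j, Relation.ReflTransGen (fun a b => A q a b ≠ 0) i j ∧ SDDRow (A q) j := by
    intro k
    induction k with
    | zero =>
        intro i hik
        rcases hc2 i with hs | ⟨j, hji, hA, hlt⟩
        · exact ⟨i, Relation.ReflTransGen.refl, (hSDDq i).2 hs⟩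
        · omega
    | succ k ih =>
        intro i hik
        rcases hc2 i with hs | ⟨j, hji, hA, hlt⟩
        · exact ⟨i, Relation.ReflTransGen.refl, (hSDDq i).2 hs⟩
        · obtain ⟨jend, hwalk, hSDD⟩ := ih j (by omega)
          exact ⟨jend, Relation.ReflTransGen.head (by rw [← (hrow i).1 j]; exact hA) hwalk, hSDD⟩
  refine ⟨q, fun i => ?_, (h3 q).2.1, fun i _ => hchain (Nat.find (hall i)) i le_rfl⟩
  rw [hrq i]
  exact hc1 i

end BellmanAux

/-- Under (H3) and (H4): if `U` solves the Bellman problem, then the supremum can be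
approximated by a sequence of controls whose matrices are nonsingular M-matrices
(equivalently, WCDD matrices). -/
theorem bellman_eventually_M_matrix
    {n : ℕ} (hn : 1 ≤ n) {P : Fin n → Type*} [∀ i, Nonempty (P i)]
    (A : (∀ i, P i) → Matrix (Fin n) (Fin n) ℝ) (y : (∀ i, P i) → Fin n → ℝ)
    (hrd : RowDecoupled A y) (h3 : H3 A) (h4 : H4 A y)
    (U : Fin n → ℝ) (hU : IsBellmanSol A y U) :
    ∃ Pc : ℕ → ∀ i, P i,
      (∀ i : Fin n,
        Tendsto (fun ℓ => y (Pc ℓ) i - (A (Pc ℓ)).mulVec U i) atTop (𝓝 0)) ∧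
      ∀ ℓ, (ZMat (A (Pc ℓ)) ∧ IsUnit (A (Pc ℓ)).det ∧ ∀ i j, 0 ≤ (A (Pc ℓ))⁻¹ i j) ∧
        WCDD (A (Pc ℓ)) := by
  have hcon : ∀ ℓ : ℕ, ∃ q : ∀ i, P i,
      (∀ i, -(1/(ℓ+1 : ℝ)) < y q i - (A q).mulVec U i) ∧ WCDD (A q) :=
    fun ℓ => exists_good_control A y hrd h3 h4 U hU (1/(ℓ+1)) (by positivity)
  choose Pc h1 h2 using hcon
  refine ⟨Pc, fun i => ?_, fun ℓ => ?_⟩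
  · have hub : ∀ ℓ, y (Pc ℓ) i - (A (Pc ℓ)).mulVec U i ≤ 0 := fun ℓ =>
      (hU i).1 (Set.mem_range_self (Pc ℓ))
    have hlb : ∀ ℓ : ℕ, -(1/(ℓ+1:ℝ)) ≤ y (Pc ℓ) i - (A (Pc ℓ)).mulVec U i := fun ℓ => (h1 ℓ i).le
    have htends : Tendsto (fun ℓ : ℕ => -(1/(ℓ+1:ℝ))) atTop (𝓝 0) := by
      rw [← neg_zero]
      exact (tendsto_one_div_add_atTop_nhds_zero_nat).neg
    exact tendsto_of_tendsto_of_tendsto_of_le_of_le htends tendsto_const_nhds hlb hub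
  · have h3q := h3 (Pc ℓ)
    obtain ⟨hdet, hinv⟩ := wcdd_M' h3q.1 h3q.2.2.1 (h2 ℓ)
    exact ⟨⟨h3q.1, hdet, hinv⟩, h2 ℓ⟩
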